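/- Let H be a finite-dimensional complex inner product space and let x, a be subspaces of H. Then (x ⊓ a) ⊔ (xᗮ ⊓ a) = a holds if and only if the orthogonal projections of H onto x and onto a commute as linear maps. -/

import Mathlib

open Submodule

/-- Two subspaces `x`, `a` of a finite-dimensional complex inner product space satisfy
the lattice-theoretic commutation relation `(x ⊓ a) ⊔ (xᗮ ⊓ a) = a` if and only if
the orthogonal projections onto `x` and onto `a` commute as linear maps on `H`. -/
theorem commutes_iff_projections_commute {H : Type*}
    [NormedAddCommGroup H] [InnerProductSpace ℂ H] [FiniteDimensional ℂ H]
    (x a : Submodule ℂ H) :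
    (x ⊓ a) ⊔ (xᗮ ⊓ a) = a ↔
      ∀ h : H,
        ((orthogonalProjection x (((orthogonalProjection a h : a) : H)) : x) : H) =
        ((orthogonalProjection a (((orthogonalProjection x h : x) : H)) : a) : H) := by
  constructor
  · intro hsup h
    -- The projection onto `x` maps `a` into `a`.
    have hPa : ∀ v ∈ a, ((orthogonalProjection x v : x) : H) ∈ a := by
      intro v hv
      rw [← hsup] at hv
      rcases mem_sup.mp hv with ⟨u, hu, w, hw, rfl⟩
      have hux : u ∈ x := hu.1
      have hwx : w ∈ xᗮ := hw.1
      have hPuw : ((orthogonalProjection x (u + w) : x) : H) = u := by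
        rw [map_add, Submodule.coe_add,
          (starProjection_apply x u).symm.trans (starProjection_eq_self_iff.mpr hux),
          Submodule.orthogonalProjectionOnto_apply_of_mem_orthogonal hwx]
        simp
      rw [hPuw]
      exact hu.2
    -- Hence the projection onto `x` maps `aᗮ` into `aᗮ`.
    have hPaperp : ∀ r ∈ aᗮ, ((orthogonalProjection x r : x) : H) ∈ aᗮ := by
      intro r hr
      rw [Submodule.mem_orthogonal]
      intro u hu
      calc (inner ℂ u (((orthogonalProjection x r : x) : H)) : ℂ)
          = inner ℂ (((orthogonalProjection x u : x) : H)) r := by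
            rw [← starProjection_apply, ← starProjection_apply, inner_starProjection_left_eq_right]
        _ = 0 := hr _ (hPa u hu)
    set q : H := ((orthogonalProjection a h : a) : H) with hq
    have hqa : q ∈ a := SetLike.coe_mem _
    have hr : h - q ∈ aᗮ := by
      have := sub_starProjection_mem_orthogonal (K := a) h
      rwa [starProjection_apply] at this
    have hsplit : ((orthogonalProjection x h : x) : H)
        = ((orthogonalProjection x q : x) : H)
          + ((orthogonalProjection x (h - q) : x) : H) := by
      have : q + (h - q) = h := by abel
      rw [← Submodule.coe_add, ← map_add, this]
    rw [hsplit, map_add, Submodule.coe_add,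
      (starProjection_apply a _).symm.trans (starProjection_eq_self_iff.mpr (hPa q hqa)),
      Submodule.orthogonalProjectionOnto_apply_of_mem_orthogonal
        (hPaperp _ hr)]
    simp
  · intro hc
    apply le_antisymm (sup_le inf_le_right inf_le_right)
    intro v hv
    set u : H := ((orthogonalProjection x v : x) : H) with hu
    have hQv : ((orthogonalProjection a v : a) : H) = v :=
      (starProjection_apply a v).symm.trans (starProjection_eq_self_iff.mpr hv)
    have hu_a : u ∈ a := by
      have h1 := hc v
      rw [hQv] at h1
      rw [hu, h1]
      exact SetLike.coe_mem _
    have hu_x : u ∈ x := SetLike.coe_mem _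
    have hw_xp : v - u ∈ xᗮ := by
      have := sub_starProjection_mem_orthogonal (K := x) v
      rwa [starProjection_apply] at this
    have hw_a : v - u ∈ a := sub_mem hv hu_a
    have hv' : v = u + (v - u) := by abel
    rw [hv']
    exact add_mem (mem_sup_left (Submodule.mem_inf.mpr ⟨hu_x, hu_a⟩))
      (mem_sup_right (Submodule.mem_inf.mpr ⟨hw_xp, hw_a⟩))
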